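/- For every code tree ω and every α with 0 < α < d^ω, there exist a nonzero finite Borel measure μ^ω on Σ^ω and a constant c(ω) < ∞ such that μ^ω([i_k]) ≤ c(ω) Φ^α(T_{i_k}^ω) for every cylinder [i_k] (k ∈ ℕ, i_k ∈ Σ_*^ω). -/

import Mathlib

open MeasureTheory Filter Set Topology
open scoped ENNReal Topology

noncomputable section

namespace CodeTreeFractal

variable {Λ : Type*} {E : Type*} [NormedAddCommGroup E] [NormedSpace ℝ E]

/-- The word formed by the first `k` letters of an infinite path `i`. -/
def word (i : ℕ → ℕ) (k : ℕ) : List ℕ := (List.range k).map i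

/-- `w` belongs to the tree `Σ_*^ω` determined by the branching numbers `Mlam`
and the code tree `ω` : at each stage the next letter is below the branching
number of the label of the current node. (Letters are indexed from `0`.) -/
def IsNode (Mlam : Λ → ℕ) (ω : List ℕ → Λ) (w : List ℕ) : Prop :=
  ∀ j : Fin w.length, w.get j < Mlam (ω (w.take j))

/-- `i` is an infinite path of `Σ^ω`. -/
def IsPath (Mlam : Λ → ℕ) (ω : List ℕ → Λ) (i : ℕ → ℕ) : Prop :=
  ∀ k, i k < Mlam (ω (word i k))

/-- The cylinder of infinite sequences beginning with the word `w`. -/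
def cylinder (w : List ℕ) : Set (ℕ → ℕ) := {i | word i w.length = w}

/-- The set `Σ^ω` of infinite paths. -/
def pathSet (Mlam : Λ → ℕ) (ω : List ℕ → Λ) : Set (ℕ → ℕ) := {i | IsPath Mlam ω i}

/-- The composition `T_{i_1}^{ω(∅)} ∘ ⋯ ∘ T_{i_k}^{ω(i_1⋯i_{k-1})}` of the linear
parts along a word. -/
def prodT (T : Λ → ℕ → E →L[ℝ] E) : (List ℕ → Λ) → List ℕ → E →L[ℝ] E
  | _, [] => ContinuousLinearMap.id ℝ E
  | ω, l :: w => (T (ω []) l).comp (prodT T (fun u => ω (l :: u)) w)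

/-- The natural projection `Z_a^ω` sending a path to the corresponding point of the
code tree fractal. -/
def Z (T : Λ → ℕ → E →L[ℝ] E) (tr : Λ → ℕ → E) (ω : List ℕ → Λ) (i : ℕ → ℕ) : E :=
  ∑' k : ℕ, prodT T ω (word i k) (tr (ω (word i k)) (i k))

/-- The code tree fractal `A_a^ω`. -/
def attractor (Mlam : Λ → ℕ) (T : Λ → ℕ → E →L[ℝ] E) (tr : Λ → ℕ → E)
    (ω : List ℕ → Λ) : Set E :=
  {x | ∃ i : ℕ → ℕ, IsPath Mlam ω i ∧ Z T tr ω i = x}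

/-- The translation parts obtained from identified translation data
`a ∈ ℝ^{D·𝒜}` through the classes `cls (λ, i)` of the equivalence relation `∼`. -/
def trOf {A : Type*} {D : ℕ} (cls : Λ → ℕ → A) (a : EuclideanSpace ℝ (A × Fin D))
    (l : Λ) (i : ℕ) : EuclideanSpace ℝ (Fin D) :=
  WithLp.toLp 2 (fun d => a (cls l i, d))

/-- The `j`-th largest singular value (`j ≥ 1`) of a linear map, via the
Courant–Fischer minimax characterization. -/
def singVal (T : E →L[ℝ] E) (j : ℕ) : ℝ :=
  sSup {r : ℝ | ∃ V : Submodule ℝ E, Module.finrank ℝ V = j ∧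
    r = sInf {s : ℝ | ∃ v ∈ V, ‖v‖ = 1 ∧ s = ‖T v‖}}

/-- The singular value function `Φ^α(T) = σ₁ ⋯ σ_{m-1} σ_m^{α-m+1}` where
`m = min (⌊α⌋ + 1) D`. -/
def Phi (D : ℕ) (T : E →L[ℝ] E) (α : ℝ) : ℝ :=
  (∏ i ∈ Finset.range (min (⌊α⌋₊ + 1) D - 1), singVal T (i + 1)) *
    singVal T (min (⌊α⌋₊ + 1) D) ^ (α - ((min (⌊α⌋₊ + 1) D - 1 : ℕ) : ℝ))

/-- The sum `S^ω(k, α)` of the singular value function over the level-`k` nodes. -/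
def S (D : ℕ) (Mlam : Λ → ℕ) (T : Λ → ℕ → E →L[ℝ] E) (ω : List ℕ → Λ)
    (k : ℕ) (α : ℝ) : ℝ :=
  ∑' w : {w : List ℕ // w.length = k ∧ IsNode Mlam ω w}, Phi D (prodT T ω w.1) α

/-- The lower pressure `p_inf^ω(α)`. -/
def pinf (D : ℕ) (Mlam : Λ → ℕ) (T : Λ → ℕ → E →L[ℝ] E) (ω : List ℕ → Λ)
    (α : ℝ) : ℝ :=
  liminf (fun k : ℕ => Real.log (S D Mlam T ω k α) / k) atTop

/-- The upper pressure `p_sup^ω(α)`. -/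
def psup (D : ℕ) (Mlam : Λ → ℕ) (T : Λ → ℕ → E →L[ℝ] E) (ω : List ℕ → Λ)
    (α : ℝ) : ℝ :=
  limsup (fun k : ℕ => Real.log (S D Mlam T ω k α) / k) atTop

/-- The stage-`j` covering sums defining the natural measure `M_j^α(Σ^ω)`. -/
def natStage (D : ℕ) (Mlam : Λ → ℕ) (T : Λ → ℕ → E →L[ℝ] E) (ω : List ℕ → Λ)
    (α : ℝ) (j : ℕ) : ℝ≥0∞ :=
  ⨅ (J : Set (List ℕ)) (_ : ∀ w ∈ J, IsNode Mlam ω w ∧ j ≤ w.length)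
    (_ : pathSet Mlam ω ⊆ ⋃ w ∈ J, cylinder w),
    ∑' w : J, ENNReal.ofReal (Phi D (prodT T ω w.1) α)

/-- The natural measure `M^α(Σ^ω) = lim_j M_j^α(Σ^ω)`. -/
def natMeasure (D : ℕ) (Mlam : Λ → ℕ) (T : Λ → ℕ → E →L[ℝ] E) (ω : List ℕ → Λ)
    (α : ℝ) : ℝ≥0∞ :=
  ⨆ j : ℕ, natStage D Mlam T ω α j

/-- The affinity dimension `d^ω = inf {α ≥ 0 : M^α(Σ^ω) = 0}`. -/
def affinityDim (D : ℕ) (Mlam : Λ → ℕ) (T : Λ → ℕ → E →L[ℝ] E)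
    (ω : List ℕ → Λ) : ℝ :=
  sInf {α : ℝ | 0 ≤ α ∧ natMeasure D Mlam T ω α = 0}

/-- `n` is a neck level of the code tree `ω` : all sub code trees rooted at
level `n` are identical. -/
def IsNeck (Mlam : Λ → ℕ) (ω : List ℕ → Λ) (n : ℕ) : Prop :=
  ∀ w w' : List ℕ, w.length = n → w'.length = n →
    IsNode Mlam ω w → IsNode Mlam ω w' → ∀ u : List ℕ,
      IsNode Mlam ω (w ++ u) → IsNode Mlam ω (w' ++ u) ∧ ω (w ++ u) = ω (w' ++ u)

/-- The subset of `Ω × ℕ^ℕ` of pairs `(ω, N)` forming the space `Ω̃` : with the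
convention `N 0 = 0`, the sequence `N 1 < N 2 < ⋯` is a strictly increasing
sequence of neck levels of `ω`. -/
def neckSpace (Mlam : Λ → ℕ) : Set ((List ℕ → Λ) × (ℕ → ℕ)) :=
  {p | p.2 0 = 0 ∧ StrictMono p.2 ∧ ∀ m, 1 ≤ m → IsNeck Mlam p.1 (p.2 m)}

/-- The shift `Ξ(ω, N) = (ω̂, N̂)`, `N̂ m = N (m+1) - N 1`, where the sub code tree
`ω̂` is rooted at the (leftmost) node of length `N 1`; on `neckSpace` the choice of
this node is irrelevant. -/
def Xi : ((List ℕ → Λ) × (ℕ → ℕ)) → ((List ℕ → Λ) × (ℕ → ℕ)) :=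
  fun p => (fun u => p.1 (List.replicate (p.2 1) 0 ++ u), fun m => p.2 (m + 1) - p.2 1)

/-! ### Auxiliary lemmas for statement3 -/

section AuxWord

variable {Λ' : Type*} {Mlam : Λ' → ℕ} {ω : List ℕ → Λ'}

lemma word_length (i : ℕ → ℕ) (k : ℕ) : (word i k).length = k := by
  simp [word]

lemma word_zero (i : ℕ → ℕ) : word i 0 = [] := by simp [word]

lemma word_succ (i : ℕ → ℕ) (k : ℕ) : word i (k + 1) = word i k ++ [i k] := by
  simp [word, List.range_succ]

lemma word_take (i : ℕ → ℕ) {j k : ℕ} (h : j ≤ k) : (word i k).take j = word i j := by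
  simp [word, List.take_range, ← List.map_take, Nat.min_eq_left h]

lemma word_prefix (i : ℕ → ℕ) {j k : ℕ} (h : j ≤ k) : word i j <+: word i k := by
  rw [← word_take i h]; exact List.take_prefix _ _

lemma word_getElem (i : ℕ → ℕ) (k : ℕ) (j : ℕ) (h : j < (word i k).length) :
    (word i k)[j] = i j := by
  simp [word]

lemma isNode_nil : IsNode Mlam ω [] := by
  intro j; exact absurd j.2 (by simp)

lemma isNode_append_iff {w : List ℕ} {l : ℕ} :
    IsNode Mlam ω (w ++ [l]) ↔ IsNode Mlam ω w ∧ l < Mlam (ω w) := by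
  constructor
  · intro h
    constructor
    · intro j
      have hj : (j : ℕ) < (w ++ [l]).length := by
        simp only [List.length_append, List.length_singleton]
        exact lt_of_lt_of_le j.2 (Nat.le_succ _)
      have := h ⟨j, hj⟩
      simpa [List.getElem_append, j.2, List.take_append_of_le_length (le_of_lt j.2)]
        using this
    · have hj : w.length < (w ++ [l]).length := by simp
      have := h ⟨w.length, hj⟩
      simpa [List.getElem_append, List.take_append_of_le_length (le_refl w.length)]
        using this
  · rintro ⟨h1, h2⟩ j
    have hj : (j : ℕ) < w.length + 1 := by simpa using j.2
    rcases Nat.lt_or_ge (j : ℕ) w.length with hlt | hge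
    · have := h1 ⟨j, hlt⟩
      simpa [List.getElem_append, hlt, List.take_append_of_le_length (le_of_lt hlt)]
        using this
    · have hje : (j : ℕ) = w.length := le_antisymm (Nat.lt_succ_iff.mp hj) hge
      simp only [List.get_eq_getElem, hje]
      simpa [List.getElem_append, List.take_append_of_le_length (le_refl w.length)]
        using h2

lemma isNode_of_isNode_append {w : List ℕ} {l : ℕ} (h : IsNode Mlam ω (w ++ [l])) :
    IsNode Mlam ω w := (isNode_append_iff.mp h).1

lemma isNode_word_of_isPath {i : ℕ → ℕ} (h : IsPath Mlam ω i) (k : ℕ) :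
    IsNode Mlam ω (word i k) := by
  induction k with
  | zero => simpa [word_zero] using (isNode_nil : IsNode Mlam ω [])
  | succ k ih =>
      rw [word_succ]
      exact isNode_append_iff.mpr ⟨ih, h k⟩

lemma isNode_prefix {w u : List ℕ} (h : IsNode Mlam ω u) (hp : w <+: u) :
    IsNode Mlam ω w := by
  obtain ⟨t, rfl⟩ := hp
  induction t using List.reverseRecOn generalizing w with
  | nil => simpa using h
  | append_singleton t a ih =>
      exact ih (isNode_of_isNode_append (by simpa [List.append_assoc] using h))

lemma isNode_cons_iff {l : ℕ} {w : List ℕ} :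
    IsNode Mlam ω (l :: w) ↔ l < Mlam (ω []) ∧ IsNode Mlam (fun u => ω (l :: u)) w := by
  constructor
  · intro h
    refine ⟨by simpa using h ⟨0, by simp⟩, fun j => ?_⟩
    have hj : (j : ℕ) + 1 < (l :: w).length := by simpa using Nat.succ_lt_succ j.2
    have := h ⟨(j : ℕ) + 1, hj⟩
    simpa [List.take_succ_cons] using this
  · rintro ⟨h0, h1⟩ j
    rcases j with ⟨jv, hj⟩
    cases jv with
    | zero => simpa using h0
    | succ n =>
        have hn : n < w.length := by simpa using hj
        have := h1 ⟨n, hn⟩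
        simpa [List.take_succ_cons] using this

end AuxWord

section AuxSing

variable {D : ℕ}

lemma prodT_injective {Λ' : Type*} {Mlam : Λ' → ℕ}
    (T : Λ' → ℕ → EuclideanSpace ℝ (Fin D) →L[ℝ] EuclideanSpace ℝ (Fin D))
    (hTns : ∀ l i, i < Mlam l → Function.Injective (T l i)) :
    ∀ (w : List ℕ) (ω : List ℕ → Λ'), IsNode Mlam ω w →
      Function.Injective (prodT T ω w) := by
  intro w
  induction w with
  | nil => intro ω _; simpa [prodT] using Function.injective_id
  | cons l w ih =>
      intro ω hw
      rcases isNode_cons_iff.mp hw with ⟨h0, h1⟩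
      have := (ih _ h1)
      simpa [prodT, ContinuousLinearMap.coe_comp'] using (hTns _ _ h0).comp this

lemma singVal_pos (T : EuclideanSpace ℝ (Fin D) →L[ℝ] EuclideanSpace ℝ (Fin D))
    (hT : Function.Injective T) {j : ℕ} (hj1 : 1 ≤ j) (hjD : j ≤ D) :
    0 < singVal T j := by
  classical
  set E' := EuclideanSpace ℝ (Fin D)
  -- antilipschitz constant
  have hbij : Function.Bijective (T : E' →ₗ[ℝ] E') :=
    ⟨hT, (LinearMap.injective_iff_surjective (f := (T : E' →ₗ[ℝ] E'))).mp hT⟩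
  let e : E' ≃L[ℝ] E' :=
    LinearEquiv.toContinuousLinearEquiv (LinearEquiv.ofBijective (T : E' →ₗ[ℝ] E') hbij)
  have hK := e.antilipschitz
  set K : NNReal := ‖(e.symm : E' →L[ℝ] E')‖₊ with hKdef
  have hKpos : (0 : ℝ) < ((K : ℝ) + 1)⁻¹ := by positivity
  have hlow : ∀ v : E', ((K : ℝ) + 1)⁻¹ * ‖v‖ ≤ ‖T v‖ := by
    intro v
    have hev : e v = T v := rfl
    have h2 : ‖v‖ ≤ ((K : ℝ) + 1) * ‖T v‖ := by
      have hsv : e.symm (e v) = v := e.symm_apply_apply v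
      calc ‖v‖ = ‖e.symm (e v)‖ := by rw [hsv]
        _ ≤ (K : ℝ) * ‖e v‖ := (e.symm : E' →L[ℝ] E').le_opNorm (e v)
        _ = (K : ℝ) * ‖T v‖ := by rw [hev]
        _ ≤ ((K : ℝ) + 1) * ‖T v‖ := by
            have : (0:ℝ) ≤ ‖T v‖ := norm_nonneg _
            nlinarith
    have hKpos' : (0:ℝ) < (K : ℝ) + 1 := by positivity
    rw [inv_mul_le_iff₀ hKpos']
    linarith
  -- choose a subspace of finrank j
  obtain ⟨V, hV⟩ : ∃ V : Submodule ℝ E', Module.finrank ℝ V = j := by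
    let b := (EuclideanSpace.basisFun (Fin D) ℝ).toBasis
    let f : Fin j → E' := fun x => b (Fin.castLE hjD x)
    have hli : LinearIndependent ℝ f :=
      b.linearIndependent.comp _ (Fin.castLE_injective hjD)
    refine ⟨Submodule.span ℝ (Set.range f), ?_⟩
    rw [finrank_span_eq_card hli, Fintype.card_fin]
  -- the inner sInf set for a subspace W of finrank j
  have inner_nonempty : ∀ (W : Submodule ℝ E'), Module.finrank ℝ W = j →
      {s : ℝ | ∃ v ∈ W, ‖v‖ = 1 ∧ s = ‖T v‖}.Nonempty := by
    intro W hW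
    have hWne : W ≠ ⊥ := by
      intro hbot
      rw [hbot, finrank_bot] at hW
      omega
    obtain ⟨v, hvW, hv0⟩ := Submodule.exists_mem_ne_zero_of_ne_bot hWne
    refine ⟨‖T ((‖v‖)⁻¹ • v)‖, (‖v‖)⁻¹ • v, W.smul_mem _ hvW, ?_, rfl⟩
    have : ‖v‖ ≠ 0 := norm_ne_zero_iff.mpr hv0
    simp [norm_smul, abs_of_nonneg (inv_nonneg.mpr (norm_nonneg v)), inv_mul_cancel₀ this]
    rw [abs_of_nonneg (norm_nonneg _)]; exact inv_mul_cancel₀ this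
  have inner_bddBelow : ∀ (W : Submodule ℝ E'),
      BddBelow {s : ℝ | ∃ v ∈ W, ‖v‖ = 1 ∧ s = ‖T v‖} := by
    intro W
    exact ⟨0, by rintro s ⟨v, _, _, rfl⟩; positivity⟩
  -- the outer set
  set Souter := {r : ℝ | ∃ V : Submodule ℝ E', Module.finrank ℝ V = j ∧
    r = sInf {s : ℝ | ∃ v ∈ V, ‖v‖ = 1 ∧ s = ‖T v‖}}
  have houtmem : sInf {s : ℝ | ∃ v ∈ V, ‖v‖ = 1 ∧ s = ‖T v‖} ∈ Souter := ⟨V, hV, rfl⟩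
  have houtbdd : BddAbove Souter := by
    refine ⟨‖T‖, ?_⟩
    rintro r ⟨W, hW, rfl⟩
    obtain ⟨s, v, hvW, hv1, rfl⟩ := inner_nonempty W hW
    calc sInf {s : ℝ | ∃ v ∈ W, ‖v‖ = 1 ∧ s = ‖T v‖} ≤ ‖T v‖ :=
          csInf_le (inner_bddBelow W) ⟨v, hvW, hv1, rfl⟩
      _ ≤ ‖T‖ * ‖v‖ := T.le_opNorm v
      _ = ‖T‖ := by rw [hv1, mul_one]
  have hlow2 : ((K : ℝ) + 1)⁻¹ ≤ sInf {s : ℝ | ∃ v ∈ V, ‖v‖ = 1 ∧ s = ‖T v‖} := by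
    apply le_csInf (inner_nonempty V hV)
    rintro s ⟨v, _, hv1, rfl⟩
    have := hlow v
    rw [hv1, mul_one] at this
    exact this
  have : ((K : ℝ) + 1)⁻¹ ≤ singVal T j :=
    le_trans hlow2 (le_csSup houtbdd houtmem)
  exact lt_of_lt_of_le hKpos this

lemma singVal_nonneg_of_pos {T : EuclideanSpace ℝ (Fin D) →L[ℝ] EuclideanSpace ℝ (Fin D)}
    {j : ℕ} (h : 0 < singVal T j) : 0 ≤ singVal T j := le_of_lt h

lemma Phi_pos (hD : 1 ≤ D) {α : ℝ}
    (T : EuclideanSpace ℝ (Fin D) →L[ℝ] EuclideanSpace ℝ (Fin D))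
    (hT : Function.Injective T) : 0 < Phi D T α := by
  have hmin1 : 1 ≤ min (⌊α⌋₊ + 1) D := le_min (Nat.le_add_left 1 _) hD
  have hminD : min (⌊α⌋₊ + 1) D ≤ D := min_le_right _ _
  apply mul_pos
  · apply Finset.prod_pos
    intro i hi
    have hi' : i < min (⌊α⌋₊ + 1) D - 1 := Finset.mem_range.mp hi
    exact singVal_pos T hT (Nat.le_add_left 1 i) (by omega)
  · exact Real.rpow_pos_of_pos (singVal_pos T hT hmin1 hminD) _

end AuxSing

section AuxMeasure

variable {Λ' : Type*} (D : ℕ) (Mlam : Λ' → ℕ)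
  (T : Λ' → ℕ → EuclideanSpace ℝ (Fin D) →L[ℝ] EuclideanSpace ℝ (Fin D))
  (ω : List ℕ → Λ') (α : ℝ) (j0 : ℕ) (M : ℕ)

/-- `Φ^α` of a word, as an extended nonnegative real. -/
def phiE (w : List ℕ) : ℝ≥0∞ := ENNReal.ofReal (Phi D (prodT T ω w) α)

/-- A finite cut-set below `w` whose elements have length at least `j0`. -/
def IsCutSet (J : Finset (List ℕ)) (w : List ℕ) : Prop :=
  (∀ u ∈ J, IsNode Mlam ω u ∧ w <+: u ∧ j0 ≤ u.length) ∧
  (∀ i : ℕ → ℕ, IsPath Mlam ω i → word i w.length = w → ∃ u ∈ J, word i u.length = u)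

/-- The subadditive envelope of `Φ^α` over cut-sets. -/
def mfun (w : List ℕ) : ℝ≥0∞ :=
  ⨅ (J : Finset (List ℕ)) (_ : IsCutSet Mlam ω j0 J w), ∑ u ∈ J, phiE D T ω α u

/-- All lists of a given length with entries at most `M`. -/
def bigFinset (k : ℕ) : Finset (List ℕ) :=
  Finset.image (fun f : Fin k → Fin (M + 1) => List.ofFn fun x => (f x : ℕ)) Finset.univ

lemma mem_bigFinset {k : ℕ} {u : List ℕ} (hlen : u.length = k)
    (hb : ∀ j : Fin u.length, u.get j ≤ M) : u ∈ bigFinset M k := by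
  classical
  refine Finset.mem_image.mpr ⟨fun x => ⟨u.get (Fin.cast hlen.symm x), ?_⟩, Finset.mem_univ _, ?_⟩
  · exact Nat.lt_succ_of_le (hb _)
  · subst hlen
    simp [List.ofFn_getElem]

variable {Mlam}

lemma mfun_le_phiE {w : List ℕ} (hw : IsNode Mlam ω w) (hlen : j0 ≤ w.length) :
    mfun D Mlam T ω α j0 w ≤ phiE D T ω α w := by
  classical
  have hcs : IsCutSet Mlam ω j0 {w} w := by
    constructor
    · intro u hu
      rw [Finset.mem_singleton] at hu
      subst hu
      exact ⟨hw, List.prefix_refl _, hlen⟩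
    · intro i _ hiw
      exact ⟨w, Finset.mem_singleton_self w, hiw⟩
  calc mfun D Mlam T ω α j0 w ≤ ⨅ (_ : IsCutSet Mlam ω j0 {w} w), ∑ u ∈ ({w} : Finset (List ℕ)), phiE D T ω α u :=
        iInf_le _ _
    _ ≤ ∑ u ∈ ({w} : Finset (List ℕ)), phiE D T ω α u := iInf_le _ hcs
    _ = phiE D T ω α w := Finset.sum_singleton _ _

lemma natStage_le_mfun_nil :
    natStage D Mlam T ω α j0 ≤ mfun D Mlam T ω α j0 [] := by
  classical
  refine le_iInf fun J => le_iInf fun hJ => ?_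
  have h1 : ∀ w ∈ (J : Set (List ℕ)), IsNode Mlam ω w ∧ j0 ≤ w.length := by
    intro w hw
    exact ⟨(hJ.1 w hw).1, (hJ.1 w hw).2.2⟩
  have h2 : pathSet Mlam ω ⊆ ⋃ w ∈ (J : Set (List ℕ)), cylinder w := by
    intro i hi
    obtain ⟨u, huJ, hu⟩ := hJ.2 i hi (by simp [word_zero])
    exact Set.mem_biUnion huJ hu
  calc natStage D Mlam T ω α j0
      ≤ ∑' w : (J : Set (List ℕ)), ENNReal.ofReal (Phi D (prodT T ω w.1) α) := by
        refine le_trans (iInf_le _ (J : Set (List ℕ))) ?_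
        exact le_trans (iInf_le _ h1) (iInf_le _ h2)
    _ = ∑ u ∈ J, phiE D T ω α u := by
        exact Finset.tsum_subtype' J (fun u => ENNReal.ofReal (Phi D (prodT T ω u) α))

lemma mfun_eq_zero_of_not_isNode {w : List ℕ} (hw : ¬ IsNode Mlam ω w) :
    mfun D Mlam T ω α j0 w = 0 := by
  classical
  have hcs : IsCutSet Mlam ω j0 (∅ : Finset (List ℕ)) w := by
    constructor
    · intro u hu; exact absurd hu (Finset.notMem_empty u)
    · intro i hi hiw
      exact absurd (hiw ▸ isNode_word_of_isPath hi w.length) hw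
  have := le_trans (iInf_le (fun J => ⨅ (_ : IsCutSet Mlam ω j0 J w),
      ∑ u ∈ J, phiE D T ω α u) ∅) (iInf_le _ hcs)
  simpa [mfun] using le_antisymm (by simpa using this) (zero_le)

lemma mfun_lt_top (hMsup : ∀ l, Mlam l ≤ M) (w : List ℕ) :
    mfun D Mlam T ω α j0 w < ∞ := by
  classical
  by_cases hw : IsNode Mlam ω w
  · rcases le_or_gt j0 w.length with hlen | hlen
    · exact lt_of_le_of_lt (mfun_le_phiE D T ω α j0 hw hlen) ENNReal.ofReal_lt_top
    · -- cut-set of all node-descendants at level j0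
      set J : Finset (List ℕ) :=
        (bigFinset M j0).filter (fun u => IsNode Mlam ω u ∧ w <+: u) with hJdef
      have hcs : IsCutSet Mlam ω j0 J w := by
        constructor
        · intro u hu
          rw [hJdef, Finset.mem_filter] at hu
          refine ⟨hu.2.1, hu.2.2, ?_⟩
          obtain ⟨f, _, rfl⟩ := Finset.mem_image.mp hu.1
          simp
        · intro i hi hiw
          refine ⟨word i j0, ?_, by simp [word_length]⟩
          rw [hJdef, Finset.mem_filter]
          refine ⟨?_, isNode_word_of_isPath hi j0, hiw ▸ word_prefix i (le_of_lt hlen)⟩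
          refine mem_bigFinset M (word_length i j0) ?_
          intro j
          have hj : (j : ℕ) < j0 := by simpa [word_length] using j.2
          have hnode := isNode_word_of_isPath hi j0 j
          exact le_trans (le_of_lt hnode) (hMsup _)
      calc mfun D Mlam T ω α j0 w ≤ ∑ u ∈ J, phiE D T ω α u :=
            le_trans (iInf_le _ J) (iInf_le _ hcs)
        _ < ∞ := by
            refine ENNReal.sum_lt_top.mpr fun u _ => ENNReal.ofReal_lt_top
  · rw [mfun_eq_zero_of_not_isNode D T ω α j0 hw]
    exact ENNReal.zero_lt_top

lemma mfun_le_sum_children (hM1 : ∀ l, 1 ≤ Mlam l) (hMsup : ∀ l, Mlam l ≤ M)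
    (w : List ℕ) :
    mfun D Mlam T ω α j0 w ≤
      ∑ l ∈ Finset.range (Mlam (ω w)), mfun D Mlam T ω α j0 (w ++ [l]) := by
  classical
  refine ENNReal.le_of_forall_pos_le_add fun ε hε hfin => ?_
  set n := Mlam (ω w) with hn
  have hn1 : 1 ≤ n := hM1 _
  have hδ : (0 : ℝ≥0∞) < (ε : ℝ≥0∞) / n := by
    apply ENNReal.div_pos (by exact_mod_cast hε.ne') (by simp)
  -- choose near-optimal cut-sets for the children
  have hchoice : ∀ l : ℕ, ∃ J : Finset (List ℕ),
      IsCutSet Mlam ω j0 J (w ++ [l]) ∧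
      ∑ u ∈ J, phiE D T ω α u ≤ mfun D Mlam T ω α j0 (w ++ [l]) + (ε : ℝ≥0∞) / n := by
    intro l
    have hlt : mfun D Mlam T ω α j0 (w ++ [l]) <
        mfun D Mlam T ω α j0 (w ++ [l]) + (ε : ℝ≥0∞) / n :=
      ENNReal.lt_add_right (mfun_lt_top D T ω α j0 M hMsup _).ne hδ.ne'
    conv_lhs at hlt => rw [mfun]
    obtain ⟨J, hJ⟩ := iInf_lt_iff.mp hlt
    obtain ⟨hcs, hsum⟩ := iInf_lt_iff.mp hJ
    exact ⟨J, hcs, le_of_lt hsum⟩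
  choose Jf hJf using hchoice
  set J : Finset (List ℕ) := (Finset.range n).biUnion Jf with hJdef
  have hgetl : ∀ (l : ℕ) (u : List ℕ), u ∈ Jf l → w ++ [l] <+: u := fun l u hu =>
    ((hJf l).1.1 u hu).2.1
  have hdisj : (↑(Finset.range n) : Set ℕ).PairwiseDisjoint Jf := by
    intro l _ l' _ hne
    refine Finset.disjoint_left.mpr fun u hu hu' => hne ?_
    obtain ⟨t, ht⟩ := hgetl l u hu
    obtain ⟨t', ht'⟩ := hgetl l' u hu'
    have : w ++ [l] ++ t = w ++ [l'] ++ t' := by rw [ht, ht']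
    have h2 : (w ++ [l] ++ t)[w.length]'(by simp) = (w ++ [l'] ++ t')[w.length]'(by simp) := by
      congr 1
    simpa [List.getElem_append] using h2
  have hcsJ : IsCutSet Mlam ω j0 J w := by
    constructor
    · intro u hu
      obtain ⟨l, hl, hul⟩ := Finset.mem_biUnion.mp hu
      obtain ⟨h1, h2, h3⟩ := (hJf l).1.1 u hul
      exact ⟨h1, ((w.prefix_append [l]).trans h2), h3⟩
    · intro i hi hiw
      have hl : i w.length < n := by
        have := hi w.length
        rwa [hiw, ← hn] at this
      have hword : word i (w.length + 1) = w ++ [i w.length] := by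
        rw [word_succ, hiw]
      obtain ⟨u, hu, huw⟩ := (hJf (i w.length)).1.2 i hi
        (by rw [List.length_append, List.length_singleton, hword])
      exact ⟨u, Finset.mem_biUnion.mpr ⟨i w.length, Finset.mem_range.mpr hl, hu⟩, huw⟩
  calc mfun D Mlam T ω α j0 w ≤ ∑ u ∈ J, phiE D T ω α u :=
        le_trans (iInf_le _ J) (iInf_le _ hcsJ)
    _ = ∑ l ∈ Finset.range n, ∑ u ∈ Jf l, phiE D T ω α u := Finset.sum_biUnion hdisj
    _ ≤ ∑ l ∈ Finset.range n, (mfun D Mlam T ω α j0 (w ++ [l]) + (ε : ℝ≥0∞) / n) :=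
        Finset.sum_le_sum fun l _ => (hJf l).2
    _ = (∑ l ∈ Finset.range n, mfun D Mlam T ω α j0 (w ++ [l])) + n * ((ε : ℝ≥0∞) / n) := by
        rw [Finset.sum_add_distrib, Finset.sum_const, Finset.card_range, nsmul_eq_mul]
    _ = (∑ l ∈ Finset.range n, mfun D Mlam T ω α j0 (w ++ [l])) + ε := by
        rw [ENNReal.mul_div_cancel (by exact_mod_cast Nat.one_le_iff_ne_zero.mp hn1)
          (by simp)]

variable (Mlam) in
/-- Ratio used to distribute mass from a node to one of its children. -/
def nuratio (u : List ℕ) : ℝ≥0∞ :=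
  mfun D Mlam T ω α j0 u /
    ∑ l ∈ Finset.range (Mlam (ω u.dropLast)), mfun D Mlam T ω α j0 (u.dropLast ++ [l])

variable (Mlam) in
/-- The mass of the cylinder of `w`. -/
def nu (w : List ℕ) : ℝ≥0∞ :=
  min (mfun D Mlam T ω α j0 []) 1 *
    ∏ k ∈ Finset.range w.length, nuratio D Mlam T ω α j0 (w.take (k + 1))

lemma nu_nil : nu D Mlam T ω α j0 [] = min (mfun D Mlam T ω α j0 []) 1 := by
  simp [nu]

lemma take_append_succ (w : List ℕ) (l : ℕ) {k : ℕ} (hk : k < w.length) :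
    (w ++ [l]).take (k + 1) = w.take (k + 1) :=
  List.take_append_of_le_length hk

lemma nu_append (w : List ℕ) (l : ℕ) :
    nu D Mlam T ω α j0 (w ++ [l]) =
      nu D Mlam T ω α j0 w * nuratio D Mlam T ω α j0 (w ++ [l]) := by
  have hlen : (w ++ [l]).length = w.length + 1 := by simp
  rw [nu, hlen, Finset.prod_range_succ, ← mul_assoc]
  congr 1
  · rw [nu]
    congr 1
    refine Finset.prod_congr rfl fun k hk => ?_
    rw [take_append_succ w l (Finset.mem_range.mp hk)]
  · rw [List.take_of_length_le (by simp)]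

lemma sum_children_lt_top (hMsup : ∀ l, Mlam l ≤ M) (w : List ℕ) :
    ∑ l ∈ Finset.range (Mlam (ω w)), mfun D Mlam T ω α j0 (w ++ [l]) < ∞ :=
  ENNReal.sum_lt_top.mpr fun l _ => mfun_lt_top D T ω α j0 M hMsup _

lemma nuratio_child (w : List ℕ) (l : ℕ) :
    nuratio D Mlam T ω α j0 (w ++ [l]) =
      mfun D Mlam T ω α j0 (w ++ [l]) /
        ∑ l' ∈ Finset.range (Mlam (ω w)), mfun D Mlam T ω α j0 (w ++ [l']) := by
  rw [nuratio, List.dropLast_concat]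

lemma nu_le_mfun (hM1 : ∀ l, 1 ≤ Mlam l) (hMsup : ∀ l, Mlam l ≤ M) :
    ∀ w : List ℕ, IsNode Mlam ω w → nu D Mlam T ω α j0 w ≤ mfun D Mlam T ω α j0 w := by
  intro w
  induction w using List.reverseRecOn with
  | nil => intro _; rw [nu_nil]; exact min_le_left _ _
  | append_singleton w l ih =>
      intro hwl
      have hw : IsNode Mlam ω w := isNode_of_isNode_append hwl
      have hmle := mfun_le_sum_children D T ω α j0 M hM1 hMsup w
      set Sw := ∑ l' ∈ Finset.range (Mlam (ω w)), mfun D Mlam T ω α j0 (w ++ [l'])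
        with hSdef
      have hSfin : Sw < ∞ := sum_children_lt_top D T ω α j0 M hMsup w
      rw [nu_append, nuratio_child]
      rcases eq_or_ne Sw 0 with h0 | h0
      · have : nu D Mlam T ω α j0 w = 0 :=
          le_antisymm (le_trans (ih hw) (le_trans hmle (le_of_eq h0))) (zero_le)
        rw [this, zero_mul]
        exact zero_le
      · calc nu D Mlam T ω α j0 w * (mfun D Mlam T ω α j0 (w ++ [l]) / Sw)
            ≤ Sw * (mfun D Mlam T ω α j0 (w ++ [l]) / Sw) :=
              mul_le_mul_left (le_trans (ih hw) hmle) _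
          _ = mfun D Mlam T ω α j0 (w ++ [l]) / Sw * Sw := mul_comm _ _
          _ = mfun D Mlam T ω α j0 (w ++ [l]) := ENNReal.div_mul_cancel h0 hSfin.ne

lemma nu_le_one (hMsup : ∀ l, Mlam l ≤ M) :
    ∀ w : List ℕ, IsNode Mlam ω w → nu D Mlam T ω α j0 w ≤ 1 := by
  intro w
  induction w using List.reverseRecOn with
  | nil => intro _; rw [nu_nil]; exact min_le_right _ _
  | append_singleton w l ih =>
      intro hwl
      have hw : IsNode Mlam ω w := isNode_of_isNode_append hwl
      have hl : l < Mlam (ω w) := (isNode_append_iff.mp hwl).2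
      rw [nu_append, nuratio_child]
      have hsingle : mfun D Mlam T ω α j0 (w ++ [l]) ≤
          ∑ l' ∈ Finset.range (Mlam (ω w)), mfun D Mlam T ω α j0 (w ++ [l']) :=
        Finset.single_le_sum (f := fun l' => mfun D Mlam T ω α j0 (w ++ [l'])) (fun _ _ => zero_le) (Finset.mem_range.mpr hl)
      have hratio : mfun D Mlam T ω α j0 (w ++ [l]) /
          (∑ l' ∈ Finset.range (Mlam (ω w)), mfun D Mlam T ω α j0 (w ++ [l'])) ≤ 1 :=
        ENNReal.div_le_of_le_mul (by simpa using hsingle)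
      calc nu D Mlam T ω α j0 w * _ ≤ 1 * 1 := mul_le_mul' (ih hw) hratio
        _ = 1 := one_mul 1

lemma nu_lt_top (hMsup : ∀ l, Mlam l ≤ M) {w : List ℕ} (hw : IsNode Mlam ω w) :
    nu D Mlam T ω α j0 w < ∞ :=
  lt_of_le_of_lt (nu_le_one D T ω α j0 M hMsup w hw) ENNReal.one_lt_top

lemma nu_sum_children (hM1 : ∀ l, 1 ≤ Mlam l) (hMsup : ∀ l, Mlam l ≤ M)
    {w : List ℕ} (hw : IsNode Mlam ω w) :
    ∑ l ∈ Finset.range (Mlam (ω w)), nu D Mlam T ω α j0 (w ++ [l]) =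
      nu D Mlam T ω α j0 w := by
  set Sw := ∑ l' ∈ Finset.range (Mlam (ω w)), mfun D Mlam T ω α j0 (w ++ [l']) with hSdef
  have hSfin : Sw < ∞ := sum_children_lt_top D T ω α j0 M hMsup w
  have hexp : ∀ l ∈ Finset.range (Mlam (ω w)),
      nu D Mlam T ω α j0 (w ++ [l]) =
        nu D Mlam T ω α j0 w * (mfun D Mlam T ω α j0 (w ++ [l]) / Sw) := by
    intro l _
    rw [nu_append, nuratio_child]
  rw [Finset.sum_congr rfl hexp, ← Finset.mul_sum]
  rcases eq_or_ne Sw 0 with h0 | h0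
  · have hν0 : nu D Mlam T ω α j0 w = 0 :=
      le_antisymm (le_trans (nu_le_mfun D T ω α j0 M hM1 hMsup w hw)
        (le_trans (mfun_le_sum_children D T ω α j0 M hM1 hMsup w) (le_of_eq h0)))
        (zero_le)
    simp [hν0]
  · have : ∑ l ∈ Finset.range (Mlam (ω w)), mfun D Mlam T ω α j0 (w ++ [l]) / Sw
        = Sw / Sw := by
      rw [hSdef]
      simp only [div_eq_mul_inv, ← Finset.sum_mul]
    rw [this, ENNReal.div_self h0 hSfin.ne, mul_one]

variable (Mlam) in
/-- The length of the interval associated with `w`. -/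
def lenI (w : List ℕ) : ℝ := (nu D Mlam T ω α j0 w).toReal

variable (Mlam) in
/-- The left endpoint of the interval associated with `w`. -/
def LI (w : List ℕ) : ℝ :=
  ∑ k ∈ Finset.range w.length,
    ∑ l ∈ Finset.range ((w.take (k + 1)).getLastD 0),
      lenI D Mlam T ω α j0 ((w.take (k + 1)).dropLast ++ [l])

lemma lenI_nonneg (w : List ℕ) : 0 ≤ lenI D Mlam T ω α j0 w := ENNReal.toReal_nonneg

lemma LI_nil : LI D Mlam T ω α j0 [] = 0 := by simp [LI]

lemma LI_append (w : List ℕ) (l : ℕ) :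
    LI D Mlam T ω α j0 (w ++ [l]) =
      LI D Mlam T ω α j0 w + ∑ l' ∈ Finset.range l, lenI D Mlam T ω α j0 (w ++ [l']) := by
  have hlen : (w ++ [l]).length = w.length + 1 := by simp
  rw [LI, hlen, Finset.sum_range_succ]
  congr 1
  · rw [LI]
    refine Finset.sum_congr rfl fun k hk => ?_
    rw [take_append_succ w l (Finset.mem_range.mp hk)]
  · rw [List.take_of_length_le (by simp), List.dropLast_concat,
      List.getLastD_concat]

lemma lenI_sum_children (hM1 : ∀ l, 1 ≤ Mlam l) (hMsup : ∀ l, Mlam l ≤ M)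
    {w : List ℕ} (hw : IsNode Mlam ω w) :
    ∑ l ∈ Finset.range (Mlam (ω w)), lenI D Mlam T ω α j0 (w ++ [l]) =
      lenI D Mlam T ω α j0 w := by
  have h := nu_sum_children D T ω α j0 M hM1 hMsup hw
  have hfin : ∀ l ∈ Finset.range (Mlam (ω w)), nu D Mlam T ω α j0 (w ++ [l]) ≠ ∞ := by
    intro l hl
    exact (nu_lt_top D T ω α j0 M hMsup
      (isNode_append_iff.mpr ⟨hw, Finset.mem_range.mp hl⟩)).ne
  calc ∑ l ∈ Finset.range (Mlam (ω w)), lenI D Mlam T ω α j0 (w ++ [l])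
      = (∑ l ∈ Finset.range (Mlam (ω w)), nu D Mlam T ω α j0 (w ++ [l])).toReal :=
        (ENNReal.toReal_sum hfin).symm
    _ = lenI D Mlam T ω α j0 w := by rw [h]; rfl

variable (Mlam) in
/-- The letter chosen at position `x` below the node `w`. -/
def gstep (x : ℝ) (w : List ℕ) : ℕ :=
  if h : ∃ l, l < Mlam (ω w) ∧
      x < LI D Mlam T ω α j0 (w ++ [l]) + lenI D Mlam T ω α j0 (w ++ [l])
  then Nat.find h else 0

variable (Mlam) in
/-- The level-`k` word containing position `x`. -/
def gword (x : ℝ) : ℕ → List ℕ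
  | 0 => []
  | k + 1 => gword x k ++ [gstep D Mlam T ω α j0 x (gword x k)]

variable (Mlam) in
/-- The path of the position `x`. -/
def fmap (x : ℝ) : ℕ → ℕ := fun k => gstep D Mlam T ω α j0 x (gword D Mlam T ω α j0 x k)

lemma gstep_lt (hM1 : ∀ l, 1 ≤ Mlam l) (x : ℝ) (w : List ℕ) :
    gstep D Mlam T ω α j0 x w < Mlam (ω w) := by
  rw [gstep]
  split
  · next h => exact (Nat.find_spec h).1
  · exact hM1 _

lemma word_fmap (x : ℝ) (k : ℕ) :
    word (fmap D Mlam T ω α j0 x) k = gword D Mlam T ω α j0 x k := by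
  induction k with
  | zero => simp [word_zero, gword]
  | succ k ih => rw [word_succ, ih, gword, fmap]

lemma fmap_isPath (hM1 : ∀ l, 1 ≤ Mlam l) (x : ℝ) :
    IsPath Mlam ω (fmap D Mlam T ω α j0 x) := by
  intro k
  rw [word_fmap]
  exact gstep_lt D T ω α j0 hM1 x _

lemma gword_isNode (hM1 : ∀ l, 1 ≤ Mlam l) (x : ℝ) (k : ℕ) :
    IsNode Mlam ω (gword D Mlam T ω α j0 x k) := by
  induction k with
  | zero => exact isNode_nil
  | succ k ih =>
      rw [gword]
      exact isNode_append_iff.mpr ⟨ih, gstep_lt D T ω α j0 hM1 x _⟩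

lemma gword_mem_Ico (hM1 : ∀ l, 1 ≤ Mlam l) (hMsup : ∀ l, Mlam l ≤ M) {x : ℝ}
    (hx0 : 0 ≤ x) (hx1 : x < lenI D Mlam T ω α j0 []) (k : ℕ) :
    LI D Mlam T ω α j0 (gword D Mlam T ω α j0 x k) ≤ x ∧
      x < LI D Mlam T ω α j0 (gword D Mlam T ω α j0 x k) +
        lenI D Mlam T ω α j0 (gword D Mlam T ω α j0 x k) := by
  induction k with
  | zero => simpa [gword, LI_nil] using ⟨hx0, hx1⟩
  | succ k ih =>
      set w := gword D Mlam T ω α j0 x k with hwdef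
      have hw : IsNode Mlam ω w := gword_isNode D T ω α j0 hM1 x k
      set n := Mlam (ω w) with hndef
      have hn1 : 1 ≤ n := hM1 _
      -- existence of a child interval containing x
      have hex : ∃ l, l < n ∧
          x < LI D Mlam T ω α j0 (w ++ [l]) + lenI D Mlam T ω α j0 (w ++ [l]) := by
        by_contra hcon
        push_neg at hcon
        have hco := hcon (n - 1) (Nat.sub_lt (lt_of_lt_of_le one_pos hn1) one_pos)
        have hLn : LI D Mlam T ω α j0 (w ++ [n - 1]) +
            lenI D Mlam T ω α j0 (w ++ [n - 1]) =
            LI D Mlam T ω α j0 w + lenI D Mlam T ω α j0 w := by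
          rw [LI_append]
          have : (∑ l' ∈ Finset.range (n - 1), lenI D Mlam T ω α j0 (w ++ [l'])) +
              lenI D Mlam T ω α j0 (w ++ [n - 1]) =
              ∑ l' ∈ Finset.range n, lenI D Mlam T ω α j0 (w ++ [l']) := by
            have hn' : n - 1 + 1 = n := Nat.succ_pred_eq_of_pos (lt_of_lt_of_le one_pos hn1)
            conv_rhs => rw [← hn']
            rw [Finset.sum_range_succ]
          rw [add_assoc, this, lenI_sum_children D T ω α j0 M hM1 hMsup hw]
        rw [hLn] at hco
        exact absurd ih.2 (not_lt.mpr hco)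
      have hstep : gstep D Mlam T ω α j0 x w = Nat.find hex := by
        rw [gstep, dif_pos hex]
      have hgw : gword D Mlam T ω α j0 x (k + 1) = w ++ [Nat.find hex] := by
        rw [gword, ← hwdef, hstep]
      rw [hgw]
      set l := Nat.find hex with hldef
      refine ⟨?_, (Nat.find_spec hex).2⟩
      -- lower bound
      rcases Nat.eq_zero_or_pos l with hl0 | hlpos
      · rw [hl0]
        simpa [LI_append] using ih.1
      · have hl1 : l - 1 < l := Nat.sub_lt hlpos one_pos
        have hmin := Nat.find_min hex hl1
        push_neg at hmin
        have hl1n : l - 1 < n := lt_trans hl1 (Nat.find_spec hex).1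
        have hge := hmin hl1n
        have : LI D Mlam T ω α j0 (w ++ [l - 1]) + lenI D Mlam T ω α j0 (w ++ [l - 1]) =
            LI D Mlam T ω α j0 (w ++ [l]) := by
          rw [LI_append, LI_append, add_assoc]
          congr 1
          have hl' : l - 1 + 1 = l := Nat.succ_pred_eq_of_pos hlpos
          conv_rhs => rw [← hl']
          rw [Finset.sum_range_succ]
        linarith [this ▸ hge]

lemma measurable_gstep (w : List ℕ) :
    Measurable fun x : ℝ => gstep D Mlam T ω α j0 x w := by
  classical
  set n := Mlam (ω w) with hndef
  set R : ℕ → ℝ := fun l =>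
    LI D Mlam T ω α j0 (w ++ [l]) + lenI D Mlam T ω α j0 (w ++ [l]) with hRdef
  have hPl : ∀ l : ℕ, MeasurableSet {x : ℝ | l < n ∧ x < R l} := by
    intro l
    by_cases hl : l < n
    · have : {x : ℝ | l < n ∧ x < R l} = Set.Iio (R l) := by
        ext x; simp [hl]
      rw [this]; exact measurableSet_Iio
    · have : {x : ℝ | l < n ∧ x < R l} = ∅ := by
        ext x; simp [hl]
      rw [this]; exact MeasurableSet.empty
  have hA : MeasurableSet {x : ℝ | ∃ l, l < n ∧ x < R l} := by
    have : {x : ℝ | ∃ l, l < n ∧ x < R l} = ⋃ l : ℕ, {x : ℝ | l < n ∧ x < R l} := by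
      ext x; simp
    rw [this]
    exact MeasurableSet.iUnion hPl
  refine measurable_to_countable' fun a => ?_
  have hsplit : (fun x : ℝ => gstep D Mlam T ω α j0 x w) ⁻¹' {a} =
      ({x : ℝ | ∃ l, l < n ∧ x < R l} ∩
        ({x : ℝ | a < n ∧ x < R a} ∩ ⋂ l ∈ Finset.range a, {x : ℝ | l < n ∧ x < R l}ᶜ)) ∪
      ({x : ℝ | ∃ l, l < n ∧ x < R l}ᶜ ∩ (if a = 0 then Set.univ else ∅)) := by
    ext x
    simp only [Set.mem_preimage, Set.mem_singleton_iff, Set.mem_union, Set.mem_inter_iff,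
      Set.mem_setOf_eq, Set.mem_iInter, Set.mem_compl_iff, Finset.mem_range]
    by_cases hx : ∃ l, l < n ∧ x < R l
    · rw [gstep, dif_pos hx]
      constructor
      · intro hfind
        subst hfind
        exact Or.inl ⟨hx, Nat.find_spec hx, fun l hl => Nat.find_min hx hl⟩
      · rintro (⟨-, hPa, hmin⟩ | ⟨hnx, -⟩)
        · exact (Nat.find_eq_iff hx).mpr ⟨hPa, fun l hl => hmin l hl⟩
        · exact absurd hx hnx
    · rw [gstep, dif_neg hx]
      constructor
      · intro h0
        subst h0
        refine Or.inr ⟨hx, by simp⟩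
      · rintro (⟨hx', -⟩ | ⟨-, hz⟩)
        · exact absurd hx' hx
        · by_cases ha : a = 0
          · exact ha.symm
          · simp [ha] at hz
  rw [hsplit]
  refine MeasurableSet.union ?_ ?_
  · exact hA.inter ((hPl a).inter (MeasurableSet.biInter (Finset.range a).countable_toSet
      fun l _ => (hPl l).compl))
  · refine hA.compl.inter ?_
    split <;> simp

lemma measurableSet_gwordEq (k : ℕ) (w : List ℕ) :
    MeasurableSet {x : ℝ | gword D Mlam T ω α j0 x k = w} := by
  classical
  induction k generalizing w with
  | zero =>
      by_cases hw : w = []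
      · have : {x : ℝ | gword D Mlam T ω α j0 x 0 = w} = Set.univ := by
          ext x; simp [gword, hw.symm]
        rw [this]; exact MeasurableSet.univ
      · have : {x : ℝ | gword D Mlam T ω α j0 x 0 = w} = ∅ := by
          ext x; simp only [gword, Set.mem_setOf_eq, Set.mem_empty_iff_false, iff_false]
          exact fun h => hw h.symm
        rw [this]; exact MeasurableSet.empty
  | succ k ih =>
      have : {x : ℝ | gword D Mlam T ω α j0 x (k + 1) = w} =
          ⋃ (p : List ℕ × ℕ) (_ : p.1 ++ [p.2] = w),
            ({x : ℝ | gword D Mlam T ω α j0 x k = p.1} ∩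
              {x : ℝ | gstep D Mlam T ω α j0 x p.1 = p.2}) := by
        ext x
        simp only [Set.mem_setOf_eq, Set.mem_iUnion, Set.mem_inter_iff]
        constructor
        · intro h
          exact ⟨(gword D Mlam T ω α j0 x k, gstep D Mlam T ω α j0 x
            (gword D Mlam T ω α j0 x k)), by rw [← h, gword], rfl, rfl⟩
        · rintro ⟨p, hp, h1, h2⟩
          rw [← hp, gword, h1, h2]
      rw [this]
      exact MeasurableSet.iUnion fun p => MeasurableSet.iUnion fun _ =>
        (ih p.1).inter (measurable_gstep D T ω α j0 p.1 (measurableSet_singleton p.2))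

lemma measurable_fmap : Measurable (fmap D Mlam T ω α j0) := by
  refine measurable_pi_lambda _ fun k => ?_
  refine measurable_to_countable' fun a => ?_
  have : (fun x => fmap D Mlam T ω α j0 x k) ⁻¹' {a} =
      ⋃ (w : List ℕ), ({x : ℝ | gword D Mlam T ω α j0 x k = w} ∩
        {x : ℝ | gstep D Mlam T ω α j0 x w = a}) := by
    ext x
    simp only [Set.mem_preimage, Set.mem_singleton_iff, Set.mem_iUnion, Set.mem_inter_iff,
      Set.mem_setOf_eq, fmap]
    constructor
    · intro h
      exact ⟨gword D Mlam T ω α j0 x k, rfl, h⟩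
    · rintro ⟨w, hw, ha⟩
      rw [hw, ha]
  rw [this]
  exact MeasurableSet.iUnion fun w => (measurableSet_gwordEq D T ω α j0 k w).inter
    (measurable_gstep D T ω α j0 w (measurableSet_singleton a))

end AuxMeasure

section AuxMeasurable

lemma measurableSet_wordEq (k : ℕ) (w : List ℕ) :
    MeasurableSet {i : ℕ → ℕ | word i k = w} := by
  by_cases h : w.length = k
  · have : {i : ℕ → ℕ | word i k = w} = ⋂ (j : Fin k), {i : ℕ → ℕ | i j = w.getD j 0} := by
      ext i
      simp only [Set.mem_setOf_eq, Set.mem_iInter]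
      constructor
      · intro hw j
        rw [← hw, List.getD_eq_getElem _ _ (by rw [word_length]; exact j.2),
          word_getElem]
      · intro hj
        refine List.ext_getElem (by rw [word_length, h]) fun j h1 h2 => ?_
        rw [word_getElem]
        have := hj ⟨j, by rwa [word_length] at h1⟩
        rw [this, List.getD_eq_getElem _ _ h2]
    rw [this]
    exact MeasurableSet.iInter fun j =>
      (measurable_pi_apply (j : ℕ)) (measurableSet_singleton _)
  · have : {i : ℕ → ℕ | word i k = w} = ∅ := by
      ext i
      simp only [Set.mem_setOf_eq, Set.mem_empty_iff_false, iff_false]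
      intro hw
      exact h (by rw [← hw, word_length])
    rw [this]
    exact MeasurableSet.empty

lemma measurableSet_cylinder (w : List ℕ) : MeasurableSet (cylinder w) :=
  measurableSet_wordEq w.length w

lemma measurableSet_pathSet {Λ' : Type*} (Mlam : Λ' → ℕ) (ω : List ℕ → Λ') :
    MeasurableSet (pathSet Mlam ω) := by
  have : pathSet Mlam ω = ⋂ (k : ℕ), ⋃ (w : List ℕ),
      ({i : ℕ → ℕ | word i k = w} ∩ {i : ℕ → ℕ | i k < Mlam (ω w)}) := by
    ext i
    simp only [pathSet, Set.mem_setOf_eq, Set.mem_iInter, Set.mem_iUnion, Set.mem_inter_iff]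
    constructor
    · intro h k
      exact ⟨word i k, rfl, h k⟩
    · rintro h k
      obtain ⟨w, hw, hlt⟩ := h k
      rwa [hw]
  rw [this]
  exact MeasurableSet.iInter fun k => MeasurableSet.iUnion fun w =>
    (measurableSet_wordEq k w).inter
      ((measurable_pi_apply k) measurableSet_Iio)

end AuxMeasurable

/-- \eqref{0507}, cf. \cite[Lemma 4.2]{F88}: for `0 < α < d^ω` there exist a
nonzero finite Borel measure `μ^ω` on `Σ^ω` and a constant `c(ω)` such that
`μ^ω([i_k]) ≤ c(ω) Φ^α(T_{i_k}^ω)` for every cylinder. -/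
theorem statement3
    {Λ : Type*} (D : ℕ) (hD : 1 ≤ D)
    (Mlam : Λ → ℕ) (hM1 : ∀ l, 1 ≤ Mlam l) (M : ℕ) (hMsup : ∀ l, Mlam l ≤ M)
    (T : Λ → ℕ → EuclideanSpace ℝ (Fin D) →L[ℝ] EuclideanSpace ℝ (Fin D))
    (hTns : ∀ l i, i < Mlam l → Function.Injective (T l i))
    (σbar : ℝ) (hσbar : σbar < 1)
    (hTnorm : ∀ l i, i < Mlam l → ‖T l i‖ ≤ σbar)
    (ω : List ℕ → Λ) (α : ℝ) (hα0 : 0 < α) (hαd : α < affinityDim D Mlam T ω) :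
    ∃ μ : Measure (ℕ → ℕ), IsFiniteMeasure μ ∧ μ ≠ 0 ∧ μ (pathSet Mlam ω)ᶜ = 0 ∧
      ∃ c : ℝ, ∀ w : List ℕ, IsNode Mlam ω w →
        μ (cylinder w) ≤ ENNReal.ofReal (c * Phi D (prodT T ω w) α) := by
  classical
  -- the natural measure at `α` is nonzero
  have hnm : natMeasure D Mlam T ω α ≠ 0 := by
    intro h0
    have hmem : α ∈ {β : ℝ | 0 ≤ β ∧ natMeasure D Mlam T ω β = 0} := ⟨le_of_lt hα0, h0⟩
    have hbdd : BddBelow {β : ℝ | 0 ≤ β ∧ natMeasure D Mlam T ω β = 0} :=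
      ⟨0, fun β hβ => hβ.1⟩
    exact absurd (csInf_le hbdd hmem) (not_le.mpr hαd)
  obtain ⟨j0, hj0⟩ : ∃ j, natStage D Mlam T ω α j ≠ 0 := by
    by_contra hc
    push_neg at hc
    exact hnm (by simp [natMeasure, hc])
  have hm0 : mfun D Mlam T ω α j0 [] ≠ 0 := by
    intro h
    exact hj0 (le_antisymm (le_trans (natStage_le_mfun_nil D T ω α j0) h.le) (zero_le))
  have hΦpos : ∀ w : List ℕ, IsNode Mlam ω w → 0 < Phi D (prodT T ω w) α := fun w hw =>
    Phi_pos hD _ (prodT_injective T hTns w ω hw)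
  -- the total mass
  set ν0 : ℝ≥0∞ := min (mfun D Mlam T ω α j0 []) 1 with hν0def
  have hν0pos : ν0 ≠ 0 := by
    rw [hν0def]
    simp only [ne_eq, min_eq_iff, not_or]
    refine ⟨fun h => hm0 h.1, fun h => one_ne_zero h.1⟩
  have hν0top : ν0 ≠ ∞ := fun h => by
    have : ν0 ≤ 1 := min_le_right _ _
    rw [h] at this
    exact absurd this (by simp)
  set total := lenI D Mlam T ω α j0 [] with htotaldef
  have htot : total = ν0.toReal := by rw [htotaldef, lenI, nu_nil]
  have htpos : 0 < total := htot ▸ ENNReal.toReal_pos hν0pos hν0top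
  -- the measure
  have hf := measurable_fmap D T ω α j0 (Mlam := Mlam)
  set μ : Measure (ℕ → ℕ) :=
    Measure.map (fmap D Mlam T ω α j0) ((volume : Measure ℝ).restrict (Set.Ico 0 total))
    with hμdef
  have hμuniv : μ Set.univ = ENNReal.ofReal total := by
    rw [hμdef, Measure.map_apply hf MeasurableSet.univ, Set.preimage_univ,
      Measure.restrict_apply MeasurableSet.univ, Set.univ_inter, Real.volume_Ico, sub_zero]
  refine ⟨μ, ⟨by rw [hμuniv]; exact ENNReal.ofReal_lt_top⟩, ?_, ?_, ?_⟩
  · intro h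
    rw [h] at hμuniv
    exact absurd hμuniv.symm (ne_of_gt (by simpa using ENNReal.ofReal_pos.mpr htpos))
  · rw [hμdef, Measure.map_apply hf (measurableSet_pathSet Mlam ω).compl]
    have : fmap D Mlam T ω α j0 ⁻¹' (pathSet Mlam ω)ᶜ = ∅ := by
      ext x
      simp only [Set.mem_preimage, Set.mem_compl_iff, Set.mem_empty_iff_false, iff_false,
        not_not]
      exact fmap_isPath D T ω α j0 hM1 x
    rw [this]
    simp
  · -- the constant
    set shortNodes : Finset (List ℕ) :=
      ((Finset.range j0).biUnion (fun k => bigFinset M k)).filter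
        (fun w => IsNode Mlam ω w) with hSNdef
    have hSNnode : ∀ u ∈ shortNodes, IsNode Mlam ω u := by
      intro u hu
      exact (Finset.mem_filter.mp hu).2
    set c : ℝ := 1 + ∑ u ∈ shortNodes, (Phi D (prodT T ω u) α)⁻¹ with hcdef
    have hsumnn : 0 ≤ ∑ u ∈ shortNodes, (Phi D (prodT T ω u) α)⁻¹ :=
      Finset.sum_nonneg fun u hu => inv_nonneg.mpr (le_of_lt (hΦpos u (hSNnode u hu)))
    have hc1 : 1 ≤ c := by rw [hcdef]; linarith
    refine ⟨c, fun w hw => ?_⟩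
    -- the basic estimate μ (cylinder w) ≤ ν w
    have hμw : μ (cylinder w) ≤ nu D Mlam T ω α j0 w := by
      rw [hμdef, Measure.map_apply hf (measurableSet_cylinder w),
        Measure.restrict_apply (hf (measurableSet_cylinder w))]
      have hsub : fmap D Mlam T ω α j0 ⁻¹' cylinder w ∩ Set.Ico 0 total ⊆
          Set.Ico (LI D Mlam T ω α j0 w)
            (LI D Mlam T ω α j0 w + lenI D Mlam T ω α j0 w) := by
        rintro x ⟨hx1, hx2⟩
        have hgw : gword D Mlam T ω α j0 x w.length = w := by
          rw [← word_fmap]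
          exact hx1
        have := gword_mem_Ico D T ω α j0 M hM1 hMsup hx2.1 hx2.2 w.length
        rw [hgw] at this
        exact this
      calc volume (fmap D Mlam T ω α j0 ⁻¹' cylinder w ∩ Set.Ico 0 total)
          ≤ volume (Set.Ico (LI D Mlam T ω α j0 w)
              (LI D Mlam T ω α j0 w + lenI D Mlam T ω α j0 w)) := measure_mono hsub
        _ = ENNReal.ofReal (lenI D Mlam T ω α j0 w) := by
            rw [Real.volume_Ico, add_sub_cancel_left]
        _ = nu D Mlam T ω α j0 w :=
            ENNReal.ofReal_toReal (nu_lt_top D T ω α j0 M hMsup hw).ne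
    rcases le_or_gt j0 w.length with hlen | hlen
    · -- long words : use the cut-set estimate
      have h1 : nu D Mlam T ω α j0 w ≤ ENNReal.ofReal (Phi D (prodT T ω w) α) :=
        le_trans (nu_le_mfun D T ω α j0 M hM1 hMsup w hw)
          (mfun_le_phiE D T ω α j0 hw hlen)
      refine le_trans hμw (le_trans h1 (ENNReal.ofReal_le_ofReal ?_))
      exact le_mul_of_one_le_left (le_of_lt (hΦpos w hw)) hc1
    · -- short words : use `ν ≤ 1` and the constant
      have h1 : nu D Mlam T ω α j0 w ≤ 1 := nu_le_one D T ω α j0 M hMsup w hw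
      have hmem : w ∈ shortNodes := by
        rw [hSNdef, Finset.mem_filter]
        refine ⟨Finset.mem_biUnion.mpr ⟨w.length, Finset.mem_range.mpr hlen, ?_⟩, hw⟩
        exact mem_bigFinset M rfl fun j => le_trans (le_of_lt (hw j)) (hMsup _)
      have hcw : (Phi D (prodT T ω w) α)⁻¹ ≤ c := by
        rw [hcdef]
        have := Finset.single_le_sum
          (f := fun u => (Phi D (prodT T ω u) α)⁻¹)
          (fun u hu => inv_nonneg.mpr (le_of_lt (hΦpos u (hSNnode u hu)))) hmem
        linarith
      have hone : (1 : ℝ) ≤ c * Phi D (prodT T ω w) α := by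
        have hΦ := hΦpos w hw
        calc (1 : ℝ) = (Phi D (prodT T ω w) α)⁻¹ * Phi D (prodT T ω w) α :=
              (inv_mul_cancel₀ (ne_of_gt hΦ)).symm
          _ ≤ c * Phi D (prodT T ω w) α :=
              mul_le_mul_of_nonneg_right hcw (le_of_lt hΦ)
      exact le_trans hμw (le_trans h1 (ENNReal.one_le_ofReal.mpr hone))

end CodeTreeFractal
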